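/- Let A = U − V be a proper G-weak regular splitting of a group invertible real n×n matrix A. Then A# ≥ 0 if and only if ρ(U#V) < 1. -/

import Mathlib

open Matrix

/-- `X` is the group inverse of `A`. -/
def IsGroupInv {n : ℕ} (A X : Matrix (Fin n) (Fin n) ℝ) : Prop :=
  A * X * A = A ∧ X * A * X = X ∧ A * X = X * A

/-- Spectral radius of a real matrix: sup of moduli of its complex eigenvalues. -/
noncomputable def specRad {n : ℕ} (A : Matrix (Fin n) (Fin n) ℝ) : ℝ :=
  sSup ((fun z : ℂ => ‖z‖) '' spectrum ℂ (A.map (algebraMap ℝ ℂ)))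

/-- `A = U - V` is a proper splitting: `R(U) = R(A)` and `N(U) = N(A)`. -/
def ProperSplitting {n : ℕ} (A U V : Matrix (Fin n) (Fin n) ℝ) : Prop :=
  A = U - V ∧ LinearMap.range U.mulVecLin = LinearMap.range A.mulVecLin ∧
    LinearMap.ker U.mulVecLin = LinearMap.ker A.mulVecLin

/-- Entrywise nonnegativity of a matrix. -/
def Nonneg {n : ℕ} (M : Matrix (Fin n) (Fin n) ℝ) : Prop :=
  ∀ i j, 0 ≤ M i j

namespace GWRaux
open Filter Topology
open scoped ENNReal NNReal

variable {n : ℕ}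

lemma nonneg_mul {M N : Matrix (Fin n) (Fin n) ℝ} (hM : Nonneg M) (hN : Nonneg N) :
    Nonneg (M * N) := fun i j => by
  rw [Matrix.mul_apply]
  exact Finset.sum_nonneg fun k _ => mul_nonneg (hM i k) (hN k j)

lemma nonneg_pow {M : Matrix (Fin n) (Fin n) ℝ} (hM : Nonneg M) (m : ℕ) : Nonneg (M ^ m) := by
  induction m with
  | zero => intro i j; by_cases h : i = j <;> simp [pow_zero, Matrix.one_apply, h]
  | succ m ih => rw [pow_succ]; exact nonneg_mul ih hM

lemma eq_of_mulVec_eq {M N : Matrix (Fin n) (Fin n) ℝ}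
    (h : ∀ x, M *ᵥ x = N *ᵥ x) : M = N := by
  ext i j
  have := congrFun (h (Pi.single j 1)) i
  simpa [Matrix.mulVec_single] using this

lemma map_pow_entry (T : Matrix (Fin n) (Fin n) ℝ) (m : ℕ) (i j : Fin n) :
    ((T.map (algebraMap ℝ ℂ)) ^ m) i j = ((T ^ m) i j : ℂ) := by
  have : (T.map (algebraMap ℝ ℂ)) ^ m = (T ^ m).map (algebraMap ℝ ℂ) := by
    simpa [RingHom.mapMatrix_apply] using (map_pow ((algebraMap ℝ ℂ).mapMatrix) T m).symm
  rw [this]; rfl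

lemma abs_lt_one_of_mem {T : Matrix (Fin n) (Fin n) ℝ}
    (h : ∀ i j, Tendsto (fun m => (T ^ m) i j) atTop (𝓝 0))
    {lam : ℂ} (hlam : lam ∈ spectrum ℂ (T.map (algebraMap ℝ ℂ))) :
    ‖lam‖ < 1 := by
  classical
  set M := T.map (algebraMap ℝ ℂ) with hM
  have hdet : (algebraMap ℂ (Matrix (Fin n) (Fin n) ℂ) lam - M).det = 0 := by
    by_contra hd
    exact (spectrum.mem_iff.mp hlam) ((Matrix.isUnit_iff_isUnit_det _).mpr (Ne.isUnit hd))
  obtain ⟨v, hv0, hv⟩ := (Matrix.exists_mulVec_eq_zero_iff).mpr hdet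
  have hMv : M *ᵥ v = lam • v := by
    have : (algebraMap ℂ (Matrix (Fin n) (Fin n) ℂ) lam) = lam • (1 : Matrix (Fin n) (Fin n) ℂ) :=
      Algebra.algebraMap_eq_smul_one lam
    rw [this, Matrix.sub_mulVec, Matrix.smul_mulVec, Matrix.one_mulVec] at hv
    have := sub_eq_zero.mp hv
    linear_combination (norm := module) -this
  have hpow : ∀ m : ℕ, (M ^ m) *ᵥ v = (lam ^ m) • v := by
    intro m
    induction m with
    | zero => simp
    | succ m ih =>
      rw [pow_succ, pow_succ, ← Matrix.mulVec_mulVec, hMv, Matrix.mulVec_smul, ih,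
        smul_smul, mul_comm]
  obtain ⟨i, hi⟩ := Function.ne_iff.mp hv0
  have hten : Tendsto (fun m => ((M ^ m) *ᵥ v) i) atTop (𝓝 0) := by
    have : ∀ m, ((M ^ m) *ᵥ v) i = ∑ j, ((T ^ m) i j : ℂ) * v j := by
      intro m; rw [Matrix.mulVec, dotProduct]
      exact Finset.sum_congr rfl fun j _ => by rw [map_pow_entry]
    simp only [this]
    have : Tendsto (fun m => ∑ j, ((T ^ m) i j : ℂ) * v j) atTop (𝓝 (∑ j : Fin n, 0)) := by
      refine tendsto_finset_sum _ fun j _ => ?_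
      have h1 : Tendsto (fun m => ((T ^ m) i j : ℂ)) atTop (𝓝 ((0 : ℝ) : ℂ)) :=
        (Complex.continuous_ofReal.tendsto _).comp (h i j)
      simpa using h1.mul_const (v j)
    simpa using this
  have hl : Tendsto (fun m => lam ^ m) atTop (𝓝 0) := by
    have h2 : Tendsto (fun m => lam ^ m * v i) atTop (𝓝 0) := by
      have : ∀ m, ((M ^ m) *ᵥ v) i = lam ^ m * v i := fun m => by rw [hpow m]; simp
      simpa [this] using hten
    have := h2.mul_const (v i)⁻¹
    simpa [mul_assoc, mul_inv_cancel₀ hi] using this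
  have hnorm : Tendsto (fun m => ‖lam‖ ^ m) atTop (𝓝 0) := by
    simpa [norm_pow] using hl.norm
  have := tendsto_pow_atTop_nhds_zero_iff.mp hnorm
  rw [abs_of_nonneg (norm_nonneg _)] at this
  simpa using this

lemma specRad_lt_one_of_tendsto {T : Matrix (Fin n) (Fin n) ℝ}
    (h : ∀ i j, Tendsto (fun m => (T ^ m) i j) atTop (𝓝 0)) : specRad T < 1 := by
  classical
  set S := (fun z : ℂ => ‖z‖) '' spectrum ℂ (T.map (algebraMap ℝ ℂ)) with hS
  have hfin : S.Finite := (Matrix.finite_spectrum _).image _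
  rcases S.eq_empty_or_nonempty with he | hne
  · rw [specRad, ← hS, he, Real.sSup_empty]; norm_num
  · have := hne.csSup_mem hfin
    rw [specRad, ← hS]
    obtain ⟨lam, hlam, hval⟩ := this
    rw [← hval]
    exact abs_lt_one_of_mem h hlam

lemma tendsto_pow_of_specRad_lt_one {T : Matrix (Fin n) (Fin n) ℝ}
    (h : specRad T < 1) (i j : Fin n) :
    Tendsto (fun m => (T ^ m) i j) atTop (𝓝 0) := by
  classical
  letI : NormedRing (Matrix (Fin n) (Fin n) ℂ) := Matrix.linftyOpNormedRing
  letI : NormedAlgebra ℂ (Matrix (Fin n) (Fin n) ℂ) := Matrix.linftyOpNormedAlgebra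
  haveI : CompleteSpace (Matrix (Fin n) (Fin n) ℂ) := FiniteDimensional.complete ℂ _
  set M := T.map (algebraMap ℝ ℂ) with hMdef
  have hbdd : BddAbove ((fun z : ℂ => ‖z‖) '' spectrum ℂ M) :=
    ((Matrix.finite_spectrum M).image _).bddAbove
  have hsr : spectralRadius ℂ M < 1 := by
    have hle : spectralRadius ℂ M ≤ ENNReal.ofReal (specRad T) := by
      rw [spectralRadius]
      refine iSup₂_le fun lam hlam => ?_
      have h1 : ‖lam‖ ≤ specRad T :=
        le_csSup hbdd (Set.mem_image_of_mem _ hlam)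
      have h2 : (‖lam‖₊ : ℝ≥0∞) = ENNReal.ofReal (‖lam‖) := by
        exact (ofReal_norm lam).symm
      rw [h2]
      exact ENNReal.ofReal_le_ofReal h1
    exact lt_of_le_of_lt hle (ENNReal.ofReal_lt_one.mpr h)
  obtain ⟨c, hc1, hc2⟩ := ENNReal.lt_iff_exists_nnreal_btwn.mp hsr
  have hg := spectrum.pow_nnnorm_pow_one_div_tendsto_nhds_spectralRadius M
  have hev : ∀ᶠ m : ℕ in atTop, (‖M ^ m‖₊ : ℝ≥0∞) ^ (1 / (m : ℝ)) < (c : ℝ≥0∞) :=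
    hg.eventually_lt_const hc1
  have hc2' : (c : ℝ) < 1 := by exact_mod_cast hc2
  have hcnn : (0:ℝ) ≤ (c:ℝ) := c.coe_nonneg
  have hbound : ∀ᶠ m : ℕ in atTop, |(T ^ m) i j| ≤ (c : ℝ) ^ m := by
    filter_upwards [hev, eventually_ge_atTop 1] with m hm hm1
    have hmne : (m : ℝ) ≠ 0 := by positivity
    have hx : (‖M ^ m‖₊ : ℝ≥0∞) ≤ (c : ℝ≥0∞) ^ m := by
      calc (‖M ^ m‖₊ : ℝ≥0∞) = (‖M ^ m‖₊ : ℝ≥0∞) ^ (1:ℝ) := by rw [ENNReal.rpow_one]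
        _ = ((‖M ^ m‖₊ : ℝ≥0∞) ^ ((m:ℝ)⁻¹ * m)) := by rw [inv_mul_cancel₀ hmne]
        _ = ((‖M ^ m‖₊ : ℝ≥0∞) ^ ((m:ℝ)⁻¹)) ^ (m:ℝ) := by rw [ENNReal.rpow_mul]
        _ ≤ (c : ℝ≥0∞) ^ (m:ℝ) := by
            apply ENNReal.rpow_le_rpow _ (by positivity)
            rw [← one_div]; exact hm.le
        _ = (c : ℝ≥0∞) ^ m := by rw [ENNReal.rpow_natCast]
    have hxnn : ‖M ^ m‖₊ ≤ c ^ m := by exact_mod_cast hx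
    have hentry : ‖(M ^ m) i j‖₊ ≤ ‖M ^ m‖₊ := by
      rw [Matrix.linfty_opNNNorm_def]
      exact le_trans
        (Finset.single_le_sum (f := fun k => ‖(M ^ m) i k‖₊) (fun _ _ => zero_le)
          (Finset.mem_univ j))
        (Finset.le_sup (f := fun r => ∑ k : Fin n, ‖(M ^ m) r k‖₊) (Finset.mem_univ i))
    have : ‖(M ^ m) i j‖ ≤ (c : ℝ) ^ m := by
      have := le_trans hentry hxnn
      exact_mod_cast this
    rw [map_pow_entry T m i j] at this
    simpa [Complex.norm_real] using this
  have htc : Tendsto (fun m : ℕ => (c:ℝ) ^ m) atTop (𝓝 0) :=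
    tendsto_pow_atTop_nhds_zero_of_lt_one hcnn hc2'
  have htcn : Tendsto (fun m : ℕ => -((c:ℝ) ^ m)) atTop (𝓝 0) := by
    simpa using htc.neg
  refine tendsto_of_tendsto_of_tendsto_of_le_of_le' htcn htc ?_ ?_
  · filter_upwards [hbound] with m hm; linarith [(abs_le.mp hm).1]
  · filter_upwards [hbound] with m hm; exact (abs_le.mp hm).2

end GWRaux

open Filter Topology

theorem G_weak_regular_convergence {n : ℕ} (A U V Ai Ui : Matrix (Fin n) (Fin n) ℝ)
    (hs : ProperSplitting A U V) (hA : IsGroupInv A Ai) (hU : IsGroupInv U Ui)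
    (hUi : Nonneg Ui) (hUV : Nonneg (Ui * V)) :
    Nonneg Ai ↔ specRad (Ui * V) < 1 := by
  classical
  obtain ⟨hAUV, hrange, hker⟩ := hs
  obtain ⟨hA1, hA2, hA3⟩ := hA
  obtain ⟨hU1, hU2, hU3⟩ := hU
  have L1 : A * Ai * U = U := by
    apply GWRaux.eq_of_mulVec_eq
    intro x
    have hx : U *ᵥ x ∈ LinearMap.range A.mulVecLin := by
      rw [← hrange]
      exact ⟨x, by simp [Matrix.mulVecLin_apply]⟩
    obtain ⟨y, hy⟩ := hx
    rw [Matrix.mulVecLin_apply] at hy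
    calc (A * Ai * U) *ᵥ x = (A * Ai) *ᵥ (U *ᵥ x) := by rw [← Matrix.mulVec_mulVec]
      _ = (A * Ai) *ᵥ (A *ᵥ y) := by rw [hy]
      _ = (A * Ai * A) *ᵥ y := by rw [Matrix.mulVec_mulVec]
      _ = A *ᵥ y := by rw [hA1]
      _ = U *ᵥ x := hy
  have L2 : A * Ui * U = A := by
    apply GWRaux.eq_of_mulVec_eq
    intro x
    have hUz : U *ᵥ (x - (Ui * U) *ᵥ x) = 0 := by
      rw [Matrix.mulVec_sub, Matrix.mulVec_mulVec, ← mul_assoc, hU1, sub_self]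
    have hmem : (x - (Ui * U) *ᵥ x) ∈ LinearMap.ker U.mulVecLin := by
      rw [LinearMap.mem_ker, Matrix.mulVecLin_apply]; exact hUz
    rw [hker, LinearMap.mem_ker, Matrix.mulVecLin_apply] at hmem
    rw [Matrix.mulVec_sub, Matrix.mulVec_mulVec] at hmem
    have heq : A *ᵥ x = (A * (Ui * U)) *ᵥ x := sub_eq_zero.mp hmem
    rw [← mul_assoc] at heq
    exact heq.symm
  have hP : U * Ui = A * Ai := by
    have e1 : A * Ai * (U * Ui) = U * Ui := by rw [← mul_assoc, L1]
    have e2 : A * Ai * (U * Ui) = A * Ai := by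
      calc A * Ai * (U * Ui) = A * Ai * (Ui * U) := by rw [hU3]
        _ = Ai * A * (Ui * U) := by rw [hA3]
        _ = Ai * (A * Ui * U) := by rw [mul_assoc Ai A (Ui * U), ← mul_assoc A Ui U]
        _ = Ai * A := by rw [L2]
        _ = A * Ai := hA3.symm
    rw [← e1, e2]
  have key : Ui + (Ui * V) * Ai = Ai := by
    have hV : V = U - A := by rw [hAUV, sub_sub_cancel]
    have k1 : Ui * U * Ai = Ai := by rw [← hU3, hP, hA3]; exact hA2
    have k2 : Ui * A * Ai = Ui := by rw [mul_assoc, ← hP, ← mul_assoc]; exact hU2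
    calc Ui + (Ui * V) * Ai = Ui + (Ui * U * Ai - Ui * A * Ai) := by
          rw [hV, mul_sub, sub_mul]
      _ = Ui + (Ai - Ui) := by rw [k1, k2]
      _ = Ai := by abel
  set T := Ui * V with hT
  have iter : ∀ m : ℕ, Ai = (∑ k ∈ Finset.range m, T ^ k * Ui) + T ^ m * Ai := by
    intro m
    induction m with
    | zero => simp
    | succ m ih =>
      have hstep : T ^ m * Ai = T ^ m * Ui + T ^ (m + 1) * Ai := by
        conv_lhs => rw [← key]
        rw [mul_add, pow_succ, mul_assoc (T ^ m) T Ai]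
      rw [Finset.sum_range_succ]
      calc Ai = (∑ k ∈ Finset.range m, T ^ k * Ui) + T ^ m * Ai := ih
        _ = (∑ k ∈ Finset.range m, T ^ k * Ui) + (T ^ m * Ui + T ^ (m + 1) * Ai) := by
            rw [hstep]
        _ = (∑ k ∈ Finset.range m, T ^ k * Ui) + T ^ m * Ui + T ^ (m + 1) * Ai := by
            rw [add_assoc]
  have hTk : ∀ m, Nonneg (T ^ m) := GWRaux.nonneg_pow hUV
  have entry_iter : ∀ m (i j : Fin n),
      Ai i j = (∑ k ∈ Finset.range m, (T ^ k * Ui) i j) + (T ^ m * Ai) i j := by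
    intro m i j
    conv_lhs => rw [iter m]
    rw [Matrix.add_apply, Matrix.sum_apply]
  constructor
  · intro hAi
    apply GWRaux.specRad_lt_one_of_tendsto
    have htu : ∀ i j : Fin n, Tendsto (fun m => (T ^ m * Ui) i j) atTop (𝓝 0) := by
      intro i j
      set s : ℕ → ℝ := fun m => ∑ k ∈ Finset.range m, (T ^ k * Ui) i j with hsdef
      have hterm : ∀ k, 0 ≤ (T ^ k * Ui) i j := fun k => GWRaux.nonneg_mul (hTk k) hUi i j
      have hsle : ∀ m, s m ≤ Ai i j := by
        intro m
        have h0 : 0 ≤ (T ^ m * Ai) i j := GWRaux.nonneg_mul (hTk m) hAi i j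
        have := entry_iter m i j
        simp only [hsdef]
        linarith
      have hmono : Monotone s := monotone_nat_of_le_succ fun m => by
        simp only [hsdef, Finset.sum_range_succ]
        linarith [hterm m]
      have hbd : BddAbove (Set.range s) := ⟨Ai i j, by rintro _ ⟨m, rfl⟩; exact hsle m⟩
      have hconv : Tendsto s atTop (𝓝 (⨆ m, s m)) := tendsto_atTop_ciSup hmono hbd
      have hshift : Tendsto (fun m => s (m + 1)) atTop (𝓝 (⨆ m, s m)) :=
        hconv.comp (tendsto_add_atTop_nat 1)
      have hdiff : Tendsto (fun m => s (m + 1) - s m) atTop (𝓝 0) := by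
        simpa using hshift.sub hconv
      have : ∀ m, s (m + 1) - s m = (T ^ m * Ui) i j := by
        intro m; simp [hsdef, Finset.sum_range_succ]
      simpa [this] using hdiff
    have hnext : ∀ i j : Fin n, Tendsto (fun m => (T ^ (m + 1)) i j) atTop (𝓝 0) := by
      intro i j
      have hrw : ∀ m : ℕ, (T ^ (m + 1)) i j = ∑ k, (T ^ m * Ui) i k * V k j := by
        intro m
        have : T ^ (m + 1) = (T ^ m * Ui) * V := by
          rw [pow_succ, hT, mul_assoc]
        rw [this, Matrix.mul_apply]
      simp only [hrw]
      have : Tendsto (fun m => ∑ k, (T ^ m * Ui) i k * V k j) atTop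
          (𝓝 (∑ k : Fin n, 0)) := by
        refine tendsto_finset_sum _ fun k _ => ?_
        simpa using (htu i k).mul_const (V k j)
      simpa using this
    intro i j
    have := (hnext i j)
    exact (tendsto_add_atTop_iff_nat 1).mp this
  · intro hrho i j
    have htend := GWRaux.tendsto_pow_of_specRad_lt_one hrho
    have hTA : Tendsto (fun m => (T ^ m * Ai) i j) atTop (𝓝 0) := by
      have hrw : ∀ m : ℕ, (T ^ m * Ai) i j = ∑ k, (T ^ m) i k * Ai k j := by
        intro m; rw [Matrix.mul_apply]
      simp only [hrw]
      have : Tendsto (fun m => ∑ k, (T ^ m) i k * Ai k j) atTop (𝓝 (∑ k : Fin n, 0)) := by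
        refine tendsto_finset_sum _ fun k _ => ?_
        simpa using (htend i k).mul_const (Ai k j)
      simpa using this
    have hle : ∀ m, (T ^ m * Ai) i j ≤ Ai i j := by
      intro m
      have hsum : 0 ≤ ∑ k ∈ Finset.range m, (T ^ k * Ui) i j :=
        Finset.sum_nonneg fun k _ => GWRaux.nonneg_mul (hTk k) hUi i j
      have := entry_iter m i j
      linarith
    exact le_of_tendsto hTA (Filter.Eventually.of_forall hle)
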